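/- Let g : ℝ^N → ℝ be a monotone norm (i.e., |x_i| ≤ |y_i| for all i implies g(x) ≤ g(y)), and let d ∈ ℝ^N, κ ≥ 1, u ≥ 1/κ be fixed. Then λ*(u) with λ_i*(u) = min(κu, max(d_i, max(1, u))) minimizes g(|λ₁ - d₁|, …, |λ_N - d_N|) over vectors λ satisfying λ_i ≥ 1 and u ≤ λ_i ≤ κu for all i. -/
import Mathlib

lemma clamp_opt (L U d μ : ℝ) (hLU : L ≤ U) (h1 : L ≤ μ) (h2 : μ ≤ U) :
    |min U (max d L) - d| ≤ |μ - d| := by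
  rcases le_total d L with h | h
  · rw [max_eq_right h, min_eq_right hLU, abs_of_nonneg (by linarith)]
    have : L - d ≤ μ - d := by linarith
    exact this.trans (le_abs_self _)
  · rw [max_eq_left h]
    rcases le_total U d with h' | h'
    · rw [min_eq_left h', abs_of_nonpos (by linarith)]
      have : d - μ ≤ |μ - d| := by
        rw [abs_sub_comm]; exact le_abs_self _
      linarith [this]
    · rw [min_eq_right h']
      simp [abs_nonneg]

/-- Lemma 2: for fixed `u`, the vector `λ*(u)` with
`λᵢ*(u) = min (κu) (max dᵢ (max 1 u))` minimizes the monotone norm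
`g(|λ₁ - d₁|, …, |λ_N - d_N|)` over the decoupled constraint set. -/
theorem decoupled_minimizer (N : ℕ) (g : (Fin N → ℝ) → ℝ)
    (hg_mono : ∀ x y : Fin N → ℝ, (∀ i, |x i| ≤ |y i|) → g x ≤ g y)
    (d : Fin N → ℝ) (κ u : ℝ) (hκ : 1 ≤ κ) (hu : 1 / κ ≤ u) :
    (∀ i, 1 ≤ min (κ * u) (max (d i) (max 1 u)) ∧
      u ≤ min (κ * u) (max (d i) (max 1 u)) ∧
      min (κ * u) (max (d i) (max 1 u)) ≤ κ * u) ∧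
    ∀ μ : Fin N → ℝ, (∀ i, 1 ≤ μ i) → (∀ i, u ≤ μ i ∧ μ i ≤ κ * u) →
      g (fun i => |min (κ * u) (max (d i) (max 1 u)) - d i|) ≤
        g (fun i => |μ i - d i|) := by
  have hκ0 : 0 < κ := by linarith
  have hu0 : 0 < u := lt_of_lt_of_le (by positivity) hu
  have hκu1 : 1 ≤ κ * u := by
    have := (div_le_iff₀ hκ0).mp hu
    linarith
  have hκuu : u ≤ κ * u := by nlinarith
  constructor
  · intro i
    refine ⟨le_min hκu1 ((le_max_left 1 u).trans (le_max_right _ _)), 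
      le_min hκuu ((le_max_right 1 u).trans (le_max_right _ _)),
      min_le_left _ _⟩
  · intro μ h1 h2
    apply hg_mono
    intro i
    rw [abs_abs, abs_abs]
    have := clamp_opt (max 1 u) (κ * u) (d i) (μ i)
      (max_le hκu1 hκuu) (max_le (h1 i) (h2 i).1) (h2 i).2
    rwa [max_comm 1 u] at this ⊢
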